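/- For every n ≥ 1, the supercomposite code A_n (defined by A_1 = [0;1] and A_{n+1} = [0...0; A_n|1; reverse(A_n')|0]) is a complete 3-skew-tolerant binary Gray code: its cyclic transition sequence δ_0,...,δ_{2^n−1} satisfies |δ_i − δ_{i+1}| ≤ 3 for all i modulo 2^n. -/

import Mathlib

/-- Codewords `c` and `d` differ exactly at coordinate `i` (1-based), by `±1` there. -/
def TransAt {m : ℕ} (c d : List (ZMod m)) (i : ℕ) : Prop :=
  1 ≤ i ∧ i ≤ c.length ∧ c.length = d.length ∧
  c.take (i-1) = d.take (i-1) ∧ c.drop i = d.drop i ∧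
  (d.getD (i-1) 0 = c.getD (i-1) 0 + 1 ∨ d.getD (i-1) 0 = c.getD (i-1) 0 - 1)

/-- `C` is a cyclic Gray code with transition sequence `δ`. -/
def CyclicGrayWith {m : ℕ} (C : List (List (ZMod m))) (δ : ℕ → ℕ) : Prop :=
  C.Nodup ∧ ∀ i < C.length,
    TransAt (C.getD i []) (C.getD ((i+1) % C.length) []) (δ i)

/-- cyclic `k`-skew-tolerance of a transition sequence. -/
def SkewCyc (P : ℕ) (δ : ℕ → ℕ) (k : ℤ) : Prop :=
  ∀ i < P, |(δ i : ℤ) - (δ ((i+1) % P) : ℤ)| ≤ k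

/-- Construction 1: `A 1 = [0;1]`,
`A (n+1) = [0…0 ; A n with 1 appended ; reverse of (A n minus first word) with 0 appended]`. -/
def grayA : ℕ → List (List (ZMod 2))
  | 0 => []
  | 1 => [[0], [1]]
  | (n+2) => List.replicate (n+2) (0 : ZMod 2) ::
      ((grayA (n+1)).map (· ++ [1]) ++ (grayA (n+1)).tail.reverse.map (· ++ [0]))

/-- The transition sequence of `grayA`. -/
def deltaA : ℕ → ℕ → ℕ
  | 0, _ => 1
  | 1, _ => 1
  | (n+2), i =>
    if i = 0 ∨ i = 2^(n+1) then n+2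
    else if i < 2^(n+1) then deltaA (n+1) (i-1)
    else deltaA (n+1) (2^(n+2) - 1 - i)

lemma deltaA_eq (n i : ℕ) : deltaA (n+2) i =
    if i = 0 ∨ i = 2^(n+1) then n+2
    else if i < 2^(n+1) then deltaA (n+1) (i-1)
    else deltaA (n+1) (2^(n+2) - 1 - i) := rfl

lemma grayA_eq (n : ℕ) : grayA (n+2) = List.replicate (n+2) (0 : ZMod 2) ::
    ((grayA (n+1)).map (· ++ [1]) ++ (grayA (n+1)).tail.reverse.map (· ++ [0])) := rfl

lemma transAt_append {c d : List (ZMod 2)} {i : ℕ} (b : ZMod 2) (h : TransAt c d i) :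
    TransAt (c ++ [b]) (d ++ [b]) i := by
  obtain ⟨h1, h2, h3, h4, h5, h6⟩ := h
  refine ⟨h1, by simp; omega, by simp [h3], ?_, ?_, ?_⟩
  · rw [List.take_append_of_le_length (by omega), List.take_append_of_le_length (by omega), h4]
  · rw [List.drop_append_of_le_length h2, List.drop_append_of_le_length (by omega), h5]
  · rwa [List.getD_append _ _ _ _ (by omega), List.getD_append _ _ _ _ (by omega)]

lemma transAt_last (c : List (ZMod 2)) (b b' : ZMod 2) (hbb : b ≠ b') :
    TransAt (c ++ [b]) (c ++ [b']) (c.length + 1) := by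
  have hb : b' = b + 1 := by revert hbb; revert b b'; decide
  refine ⟨by omega, by simp, by simp, ?_, ?_, ?_⟩
  · rw [show c.length + 1 - 1 = c.length from rfl,
      List.take_append_of_le_length le_rfl, List.take_append_of_le_length le_rfl]
  · rw [List.drop_eq_nil_of_le (by simp), List.drop_eq_nil_of_le (by simp)]
  · rw [show c.length + 1 - 1 = c.length from rfl,
      List.getD_append_right _ _ _ _ le_rfl, List.getD_append_right _ _ _ _ le_rfl]
    simp [hb]

lemma transAt_symm {c d : List (ZMod 2)} {i : ℕ} (h : TransAt c d i) : TransAt d c i := by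
  obtain ⟨h1, h2, h3, h4, h5, h6⟩ := h
  refine ⟨h1, by omega, h3.symm, h4.symm, h5.symm, ?_⟩
  have key : ∀ a b : ZMod 2, (b = a + 1 ∨ b = a - 1) → (a = b + 1 ∨ a = b - 1) := by decide
  exact key _ _ h6

lemma grayA_key : ∀ n : ℕ, 1 ≤ n →
    (∀ c ∈ grayA n, c.length = n) ∧
    (grayA n).length = 2^n ∧
    (grayA n).getD 0 [] = List.replicate n 0 ∧
    (grayA n).Nodup ∧
    (∀ i < 2^n, TransAt ((grayA n).getD i []) ((grayA n).getD ((i+1) % 2^n) []) (deltaA n i)) ∧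
    deltaA n 0 = n ∧
    deltaA n 1 = max (n-1) 1 ∧
    deltaA n (2^n - 1) = max (n-1) 1 ∧
    max (n-2) 1 ≤ deltaA n (2^n - 2) ∧ deltaA n (2^n - 2) ≤ n ∧
    (∀ i, i + 1 < 2^n → |(deltaA n i : ℤ) - (deltaA n (i+1) : ℤ)| ≤ 3) := by
  intro n hn
  induction n, hn using Nat.le_induction with
  | base =>
    refine ⟨by decide, rfl, rfl, by decide, ?_, rfl, rfl, rfl, le_rfl, le_rfl, ?_⟩
    · intro i hi
      norm_num at hi
      interval_cases i
      · show TransAt [0] [1] 1; unfold TransAt; decide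
      · show TransAt [1] [0] 1; unfold TransAt; decide
    · intro i hi
      norm_num at hi
      simp [deltaA]
  | succ n hn IH =>
    obtain ⟨m, rfl⟩ : ∃ m, n = m + 1 := ⟨n - 1, by omega⟩
    obtain ⟨hlen, hLA, hhead, hnd, htrans, hδ0, hδ1, hδlast, hδsub_lo, hδsub_hi, hskew⟩ := IH
    set A := grayA (m+1) with hA
    set Q := 2^(m+1) with hQdef
    have hQ2 : 2 ≤ Q := by
      rw [hQdef]; calc (2:ℕ) = 2^1 := rfl
        _ ≤ 2^(m+1) := Nat.pow_le_pow_right (by norm_num) (by omega)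
    have hP : 2^(m+2) = Q + Q := by rw [hQdef]; ring
    set L1 := A.map (· ++ [1]) with hL1
    set L2 := A.tail.reverse.map (· ++ [0]) with hL2
    have hBdef : grayA (m+2) = List.replicate (m+2) (0:ZMod 2) :: (L1 ++ L2) := grayA_eq m
    have hL1len : L1.length = Q := by rw [hL1, List.length_map, hLA]
    have hL2len : L2.length = Q - 1 := by
      rw [hL2, List.length_map, List.length_reverse, List.length_tail, hLA]
    have hBlen : (grayA (m+2)).length = 2^(m+2) := by
      rw [hBdef, List.length_cons, List.length_append, hL1len, hL2len]; omega
    -- clean transitions of A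
    have hT : ∀ i, i + 1 < Q → TransAt (A.getD i []) (A.getD (i+1) []) (deltaA (m+1) i) := by
      intro i hi
      have := htrans i (by omega)
      rwa [Nat.mod_eq_of_lt (by omega)] at this
    -- getD formulas for B
    have hB1 : ∀ i, 1 ≤ i → i ≤ Q → (grayA (m+2)).getD i [] = A.getD (i-1) [] ++ [1] := by
      intro i h1 h2
      obtain ⟨j, rfl⟩ : ∃ j, i = j + 1 := ⟨i - 1, by omega⟩
      rw [hBdef, List.getD_cons_succ, List.getD_append _ _ _ _ (by omega),
        List.getD_eq_getElem _ _ (by omega),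
        List.getD_eq_getElem _ _ (show j + 1 - 1 < A.length by rw [hLA]; omega)]
      simp only [hL1, List.getElem_map]
      simp
    have hB2 : ∀ i, Q + 1 ≤ i → i ≤ 2^(m+2) - 1 →
        (grayA (m+2)).getD i [] = A.getD (2^(m+2) - i) [] ++ [0] := by
      intro i h1 h2
      obtain ⟨j, rfl⟩ : ∃ j, i = j + 1 := ⟨i - 1, by omega⟩
      have hjQ : Q ≤ j := by omega
      have hjlt : j - Q < L2.length := by rw [hL2len]; omega
      rw [hBdef, List.getD_cons_succ, List.getD_append_right _ _ _ _ (by omega),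
        hL1len, List.getD_eq_getElem _ _ hjlt,
        List.getD_eq_getElem _ _ (show 2^(m+2) - (j+1) < A.length by rw [hLA]; omega)]
      simp only [hL2, List.getElem_map, List.getElem_reverse, List.getElem_tail]
      have hidx : A.tail.length - 1 - (j - Q) + 1 = 2^(m+2) - (j+1) := by
        rw [List.length_tail, hLA]; omega
      simp only [hidx]
    have hB0 : (grayA (m+2)).getD 0 [] = List.replicate (m+2) 0 := by
      rw [hBdef, List.getD_cons_zero]
    -- lengths of members
    have hlenB : ∀ c ∈ grayA (m+2), c.length = m + 2 := by
      intro c hc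
      rw [hBdef, List.mem_cons, List.mem_append] at hc
      rcases hc with rfl | hc | hc
      · simp
      · rw [hL1, List.mem_map] at hc
        obtain ⟨a, ha, rfl⟩ := hc
        rw [List.length_append, hlen a ha]; rfl
      · rw [hL2, List.mem_map] at hc
        obtain ⟨a, ha, rfl⟩ := hc
        have := hlen a (List.mem_of_mem_tail (List.mem_reverse.mp ha))
        rw [List.length_append, this]; rfl
    -- A = a :: As
    obtain ⟨a, As, hAcons⟩ : ∃ a As, A = a :: As := by
      cases hA' : A with
      | nil => rw [hA', List.length_nil] at hLA; omega
      | cons a As => exact ⟨a, As, rfl⟩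
    have ha0 : a = List.replicate (m+1) 0 := by
      rw [hAcons, List.getD_cons_zero] at hhead; exact hhead
    -- Nodup
    have hndB : (grayA (m+2)).Nodup := by
      rw [hBdef, List.nodup_cons, List.nodup_append]
      refine ⟨?_, ?_, ?_, ?_⟩
      · simp only [List.mem_append, hL1, hL2, List.mem_map]
        rintro (⟨c, hc, heq⟩ | ⟨c, hc, heq⟩)
        · have hc' : c.length = m+1 := hlen c hc
          have e1 : (c ++ [(1:ZMod 2)]).getD (m+1) 0 = 1 := by
            rw [List.getD_append_right _ _ _ _ (by omega)]; simp [hc']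
          rw [heq] at e1
          rw [List.getD_eq_getElem _ _ (by simp), List.getElem_replicate] at e1
          exact absurd e1 (by decide)
        · have hcA : c ∈ A := List.mem_of_mem_tail (List.mem_reverse.mp hc)
          have hc' : c.length = m+1 := hlen c hcA
          have heq' : c ++ [(0:ZMod 2)] = List.replicate (m+1) 0 ++ [0] := by
            rw [heq, List.replicate_succ']
          have hceq : c = List.replicate (m+1) 0 := (List.append_inj heq' (by simp [hc'])).1
          have hnd' : (a :: As).Nodup := hAcons ▸ hnd
          have hcAs : c ∈ As := by
            have h' := List.mem_reverse.mp hc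
            rw [hAcons] at h'
            simpa using h'
          rw [List.nodup_cons] at hnd'
          exact hnd'.1 (by rwa [ha0, ← hceq])
      · exact List.Nodup.map (List.append_left_injective _) hnd
      · refine List.Nodup.map (List.append_left_injective _) ?_
        rw [List.nodup_reverse]
        rw [hAcons, List.nodup_cons] at hnd
        rw [hAcons]; exact hnd.2
      · intro x hx1 y hx2 hxy; subst hxy
        rw [hL1, List.mem_map] at hx1
        rw [hL2, List.mem_map] at hx2
        obtain ⟨c, hc, rfl⟩ := hx1
        obtain ⟨c', hc', heq⟩ := hx2
        have h1 : c'.length = m+1 := hlen c' (List.mem_of_mem_tail (List.mem_reverse.mp hc'))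
        have h2 : c.length = m+1 := hlen c hc
        have := (List.append_inj heq (by omega)).2
        simp at this
    -- transitions of B
    have htransB : ∀ i < 2^(m+2), TransAt ((grayA (m+2)).getD i [])
        ((grayA (m+2)).getD ((i+1) % 2^(m+2)) []) (deltaA (m+2) i) := by
      intro i hi
      rcases Nat.lt_or_ge i 1 with h | h
      · -- i = 0
        have hi0 : i = 0 := by omega
        subst hi0
        rw [Nat.mod_eq_of_lt (by omega), hB0, hB1 1 le_rfl (by omega)]
        rw [show (1:ℕ) - 1 = 0 from rfl, hhead]
        rw [deltaA_eq]
        rw [if_pos (Or.inl rfl)]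
        have := transAt_last (List.replicate (m+1) (0:ZMod 2)) 0 1 (by decide)
        rwa [← List.replicate_succ', List.length_replicate] at this
      rcases Nat.lt_or_ge i Q with h2 | h2
      · -- 1 ≤ i ≤ Q - 1
        rw [Nat.mod_eq_of_lt (by omega), hB1 i h (by omega), hB1 (i+1) (by omega) (by omega)]
        rw [show i + 1 - 1 = (i-1) + 1 by omega]
        rw [deltaA_eq, if_neg (by omega), if_pos h2]
        exact transAt_append 1 (hT (i-1) (by omega))
      rcases Nat.lt_or_ge Q i with h3 | h3
      swap
      · -- i = Q
        have hiQ : i = Q := by omega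
        subst hiQ
        rw [Nat.mod_eq_of_lt (by omega), hB1 Q (by omega) le_rfl, hB2 (Q+1) le_rfl (by omega)]
        rw [show 2^(m+2) - (Q+1) = Q - 1 by omega]
        rw [deltaA_eq, if_pos (Or.inr hQdef)]
        have hmem : A.getD (Q-1) [] ∈ A := by
          rw [List.getD_eq_getElem _ _ (by omega)]; exact List.getElem_mem _
        have hl : (A.getD (Q-1) []).length = m + 1 := hlen _ hmem
        have := transAt_last (A.getD (Q-1) []) 1 0 (by decide)
        rwa [hl] at this
      rcases Nat.lt_or_ge i (2^(m+2) - 1) with h4 | h4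
      · -- Q+1 ≤ i ≤ P-2
        rw [Nat.mod_eq_of_lt (by omega), hB2 i (by omega) (by omega),
          hB2 (i+1) (by omega) (by omega)]
        rw [deltaA_eq, if_neg (by omega), if_neg (by omega)]
        set k := 2^(m+2) - 1 - i with hk
        rw [show 2^(m+2) - i = k + 1 by omega, show 2^(m+2) - (i+1) = k by omega]
        exact transAt_append 0 (transAt_symm (hT k (by omega)))
      · -- i = P - 1
        have hiP : i = 2^(m+2) - 1 := by omega
        subst hiP
        rw [show 2^(m+2) - 1 + 1 = 2^(m+2) by omega, Nat.mod_self]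
        rw [hB2 _ (by omega) le_rfl, hB0]
        rw [show 2^(m+2) - (2^(m+2) - 1) = 1 by omega]
        rw [deltaA_eq, if_neg (by omega), if_neg (by omega)]
        rw [show 2^(m+2) - 1 - (2^(m+2) - 1) = 0 by omega]
        have h01 : A.getD 0 [] = List.replicate (m+1) 0 := hhead
        have := transAt_append (0:ZMod 2) (transAt_symm (hT 0 (by omega)))
        rwa [h01, ← List.replicate_succ'] at this
    -- delta facts
    have hd0 : deltaA (m+2) 0 = m + 2 := by rw [deltaA_eq, if_pos (Or.inl rfl)]
    have hd1 : deltaA (m+2) 1 = m + 1 := by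
      rw [deltaA_eq, if_neg (by omega), if_pos (by omega)]
      simpa using hδ0
    have hdlast : deltaA (m+2) (2^(m+2) - 1) = m + 1 := by
      rw [deltaA_eq, if_neg (by omega), if_neg (by omega),
        show 2^(m+2) - 1 - (2^(m+2) - 1) = 0 by omega]
      simpa using hδ0
    have hdsub : max m 1 ≤ deltaA (m+2) (2^(m+2) - 2) ∧ deltaA (m+2) (2^(m+2) - 2) ≤ m + 2 := by
      rcases Nat.eq_or_lt_of_le hQ2 with hQ2' | hQ2'
      · -- Q = 2, m = 0
        have hm : m = 0 := by
          rcases m with _ | m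
          · rfl
          · exfalso; rw [hQdef] at hQ2'
            have : (4:ℕ) ≤ 2^(m+1+1) := by
              calc (4:ℕ) = 2^2 := rfl
              _ ≤ _ := Nat.pow_le_pow_right (by norm_num) (by omega)
            omega
        subst hm
        norm_num [deltaA_eq]
      · -- Q ≥ 3 (in fact ≥ 4)
        rw [deltaA_eq, if_neg (by omega), if_neg (by omega),
          show 2^(m+2) - 1 - (2^(m+2) - 2) = 1 by omega, hδ1]
        omega
    -- skew
    have hskewB : ∀ i, i + 1 < 2^(m+2) →
        |(deltaA (m+2) i : ℤ) - (deltaA (m+2) (i+1) : ℤ)| ≤ 3 := by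
      intro i hi
      rcases Nat.lt_or_ge i 1 with h | h
      · have : i = 0 := by omega
        subst this
        rw [hd0, hd1, abs_le]; constructor <;> push_cast <;> omega
      rcases Nat.lt_or_ge (i+1) Q with h2 | h2
      · rw [deltaA_eq, if_neg (by omega), if_pos (by omega),
          deltaA_eq, if_neg (by omega), if_pos h2,
          show i + 1 - 1 = (i - 1) + 1 by omega]
        exact hskew (i-1) (by omega)
      rcases Nat.lt_or_ge i Q with h3 | h3
      · -- i = Q - 1, i + 1 = Q
        have : i = Q - 1 := by omega
        subst this
        rw [show Q - 1 + 1 = Q by omega, deltaA_eq (i := Q), if_pos (Or.inr hQdef),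
          deltaA_eq (i := Q - 1), if_neg (by omega), if_pos (by omega),
          show Q - 1 - 1 = Q - 2 by omega]
        rw [abs_le]
        constructor <;> push_cast <;> omega
      rcases Nat.lt_or_ge Q i with h4 | h4
      · -- Q + 1 ≤ i
        rw [deltaA_eq, if_neg (by omega), if_neg (by omega),
          deltaA_eq (i := i+1), if_neg (by omega), if_neg (by omega)]
        set k := 2^(m+2) - 1 - (i+1) with hk
        rw [show 2^(m+2) - 1 - i = k + 1 by omega]
        rw [abs_sub_comm]
        exact hskew k (by omega)
      · -- i = Q
        have : i = Q := by omega
        subst this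
        rw [deltaA_eq (i := Q), if_pos (Or.inr hQdef), deltaA_eq (i := Q + 1),
          if_neg (by omega), if_neg (by omega),
          show 2^(m+2) - 1 - (Q + 1) = Q - 2 by omega]
        rw [abs_le]
        constructor <;> push_cast <;> omega
    refine ⟨hlenB, hBlen, hB0, hndB, htransB, hd0, ?_, ?_, ?_, ?_, hskewB⟩
    · rw [hd1]; omega
    · rw [hdlast]; omega
    · exact hdsub.1
    · exact hdsub.2

theorem stmt2 : ∀ n : ℕ, 1 ≤ n →
    (∀ c ∈ grayA n, c.length = n) ∧ (grayA n).length = 2 ^ n ∧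
    ∃ δ : ℕ → ℕ, CyclicGrayWith (grayA n) δ ∧ SkewCyc (grayA n).length δ 3 := by
  intro n hn
  obtain ⟨hlen, hLA, _, hnd, htrans, hδ0, _, hδlast, _, _, hskew⟩ := grayA_key n hn
  refine ⟨hlen, hLA, deltaA n, ⟨hnd, ?_⟩, ?_⟩
  · intro i hi
    rw [hLA] at hi ⊢
    exact htrans i hi
  · rw [hLA]
    intro i hi
    by_cases h : i + 1 < 2^n
    · rw [Nat.mod_eq_of_lt h]
      exact hskew i h
    · have : i = 2^n - 1 := by omega
      subst this
      rw [show 2^n - 1 + 1 = 2^n by omega, Nat.mod_self, hδlast, hδ0, abs_le]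
      constructor <;> push_cast <;> omega
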